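/- Let Y be a metric space and (X, 𝒜, ν) a probability space. Let f : Y × X → [0,∞) be a function such that (i) for every x ∈ X and every ε > 0 the set {y ∈ Y : f(y,x) < ε} is open in Y, and (ii) for every y ∈ Y and every ε > 0 the set {x ∈ X : f(y,x) < ε} is 𝒜-measurable. Then the set {y ∈ Y : f(y,x) = 0 for ν-almost every x ∈ X} is a G_δ subset of Y, i.e. a countable intersection of open sets. -/

import Mathlib

open MeasureTheory

open scoped ENNReal

/-- Abstract content of Proposition `gdeltatop`: if `f : Y × X → [0,∞)` is such that
sublevel sets in `y` are open and sublevel sets in `x` are measurable, then the set of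
`y` for which `f(y, ·)` vanishes `ν`-almost everywhere is a `Gδ` subset of `Y`. -/
theorem gdelta_of_ae_vanishing
    {Y X : Type*} [MetricSpace Y] [MeasurableSpace X]
    (ν : Measure X) [IsProbabilityMeasure ν]
    (f : Y → X → ℝ) (hf_nonneg : ∀ y x, 0 ≤ f y x)
    (h_open : ∀ x : X, ∀ ε : ℝ, 0 < ε → IsOpen {y : Y | f y x < ε})
    (h_meas : ∀ y : Y, ∀ ε : ℝ, 0 < ε → MeasurableSet {x : X | f y x < ε}) :
    IsGδ {y : Y | ∀ᵐ x ∂ν, f y x = 0} := by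
  have hεpos : ∀ n : ℕ, (0:ℝ) < ((n:ℝ)+1)⁻¹ := fun n => by positivity
  have hset : {y : Y | ∀ᵐ x ∂ν, f y x = 0} =
      ⋂ (n : ℕ) (m : ℕ),
        {y : Y | (1:ℝ≥0∞) - ((m:ℝ≥0∞)+1)⁻¹ < ν {x | f y x < ((n:ℝ)+1)⁻¹}} := by
    ext y
    simp only [Set.mem_iInter, Set.mem_setOf_eq]
    constructor
    · intro h n m
      have hnull : ν {x | ¬ f y x = 0} = 0 := ae_iff.1 h
      have hcompl : ν {x | f y x < ((n:ℝ)+1)⁻¹}ᶜ = 0 := by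
        refine measure_mono_null ?_ hnull
        intro x hx
        simp only [Set.mem_compl_iff, Set.mem_setOf_eq, not_lt] at hx ⊢
        intro h0
        exact absurd (h0 ▸ hx) (not_le.2 (hεpos n))
      have h1 : ν {x | f y x < ((n:ℝ)+1)⁻¹} = 1 :=
        (prob_compl_eq_zero_iff (h_meas y _ (hεpos n))).1 hcompl
      rw [h1]
      exact ENNReal.sub_lt_self ENNReal.one_ne_top one_ne_zero (ENNReal.inv_ne_zero.2 (by finiteness))
    · intro h
      have h1 : ∀ n : ℕ, ν {x | f y x < ((n:ℝ)+1)⁻¹} = 1 := by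
        intro n
        refine le_antisymm prob_le_one ?_
        refine ENNReal.le_of_forall_pos_le_add fun ε hε _ => ?_
        obtain ⟨m, hm⟩ := ENNReal.exists_inv_nat_lt (a := (ε : ℝ≥0∞))
          (by exact_mod_cast hε.ne')
        have hm1 : ((m:ℝ≥0∞)+1)⁻¹ ≤ (ε : ℝ≥0∞) := by
          refine le_trans ?_ hm.le
          exact ENNReal.inv_le_inv.2 (by exact_mod_cast Nat.le_succ m)
        have hle : ((m:ℝ≥0∞)+1)⁻¹ ≤ 1 := by
          rw [ENNReal.inv_le_one]
          exact le_add_self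
        calc (1:ℝ≥0∞) = (1 - ((m:ℝ≥0∞)+1)⁻¹) + ((m:ℝ≥0∞)+1)⁻¹ :=
              (tsub_add_cancel_of_le hle).symm
          _ ≤ ν {x | f y x < ((n:ℝ)+1)⁻¹} + ε := add_le_add (h n m).le hm1
      rw [ae_iff]
      have hsub : {x | ¬ f y x = 0} ⊆ ⋃ n : ℕ, {x | f y x < ((n:ℝ)+1)⁻¹}ᶜ := by
        intro x hx
        have hpos : 0 < f y x := lt_of_le_of_ne (hf_nonneg y x) (Ne.symm hx)
        obtain ⟨n, hn⟩ := exists_nat_one_div_lt hpos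
        refine Set.mem_iUnion.2 ⟨n, ?_⟩
        simp only [Set.mem_compl_iff, Set.mem_setOf_eq, not_lt]
        rw [one_div] at hn
        exact hn.le
      refine measure_mono_null hsub (measure_iUnion_null fun n => ?_)
      exact (prob_compl_eq_zero_iff (h_meas y _ (hεpos n))).2 (h1 n)
  rw [hset]
  refine IsGδ.iInter fun n => IsGδ.iInter fun m => IsOpen.isGδ ?_
  rw [Metric.isOpen_iff]
  intro y₀ hy₀
  set ε : ℝ := ((n:ℝ)+1)⁻¹ with hε
  set B : ℕ → Set X := fun k => {x | ∀ z ∈ Metric.ball y₀ ((k:ℝ)+1)⁻¹, f z x < ε} with hB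
  have hdir : Directed (· ⊆ ·) B := by
    intro k l
    refine ⟨max k l, fun x hx z hz => hx z (Metric.ball_subset_ball ?_ hz),
      fun x hx z hz => hx z (Metric.ball_subset_ball ?_ hz)⟩
    · exact inv_anti₀ (by positivity) (by simp [add_le_add_iff_right, le_max_left])
    · exact inv_anti₀ (by positivity) (by simp [add_le_add_iff_right, le_max_right])
  have hunion : ⋃ k, B k = {x | f y₀ x < ε} := by
    ext x
    constructor
    · rintro hx
      obtain ⟨k, hk⟩ := Set.mem_iUnion.1 hx
      exact hk y₀ (Metric.mem_ball_self (by positivity))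
    · intro hx
      obtain ⟨r, hr, hball⟩ := Metric.isOpen_iff.1 (h_open x ε (hεpos n)) y₀ hx
      obtain ⟨k, hk⟩ := exists_nat_one_div_lt hr
      rw [one_div] at hk
      exact Set.mem_iUnion.2 ⟨k, fun z hz => hball (Metric.ball_subset_ball hk.le hz)⟩
  have hsup : (1:ℝ≥0∞) - ((m:ℝ≥0∞)+1)⁻¹ < ⨆ k, ν (B k) := by
    rw [← hdir.measure_iUnion, hunion]
    exact hy₀
  obtain ⟨k, hk⟩ := lt_iSup_iff.1 hsup
  refine ⟨((k:ℝ)+1)⁻¹, by positivity, fun z hz => ?_⟩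
  exact lt_of_lt_of_le hk (measure_mono fun x hx => hx z hz)
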